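/- Let G be a finitely generated group, let Z ⊴ G be a finitely generated normal subgroup that is undistorted in G and has sub-exponential growth, and let H = G/Z. Let S be a finite generating set of G and let S̄ denote its image in H under the quotient map. Then for every real number L, |B_k(G,S)|^{1/k} → L as k → ∞ if and only if |B_k(H,S̄)|^{1/k} → L as k → ∞; in particular e(G,S) = e(H,S̄) whenever either limit exists. -/

import Mathlib

/-- The ball of radius `k` in a group `G` with respect to a (generating) set `S`:
elements expressible as a product of at most `k` elements of `S ∪ S⁻¹`. -/
def ball {G : Type*} [Group G] (S : Set G) (k : ℕ) : Set G :=
  {g | ∃ l : List G, l.length ≤ k ∧ (∀ x ∈ l, x ∈ S ∨ x⁻¹ ∈ S) ∧ l.prod = g}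

/-- The set `ξ(G)` of exponential growth rates of `G`: real numbers `L` such that
`|B_k(G,S)|^{1/k} → L` for some finite generating set `S` of `G`. -/
noncomputable def growthRates (G : Type*) [Group G] : Set ℝ :=
  {L | ∃ S : Finset G, Subgroup.closure (S : Set G) = ⊤ ∧
    Filter.Tendsto (fun k : ℕ => ((ball (S : Set G) k).ncard : ℝ) ^ (1 / (k : ℝ)))
      Filter.atTop (nhds L)}

/-- The word length `|g|_S`: the least `k` such that `g` lies in the ball of radius `k`. -/
noncomputable def wordLength {G : Type*} [Group G] (S : Set G) (g : G) : ℕ :=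
  sInf {k | g ∈ ball S k}

/-- A finitely generated subgroup `Z ≤ G` is undistorted if, for some finite generating
sets `T` of `Z` and `S` of `G`, there is `C > 0` with `|h|_T ≤ C·(|h|_S + 1)` for all `h ∈ Z`. -/
def Undistorted {G : Type*} [Group G] (Z : Subgroup G) : Prop :=
  ∃ T : Finset Z, Subgroup.closure (T : Set Z) = ⊤ ∧
    ∃ S : Finset G, Subgroup.closure (S : Set G) = ⊤ ∧
      ∃ C : ℝ, 0 < C ∧ ∀ h : Z,
        (wordLength (T : Set Z) h : ℝ) ≤ C * ((wordLength (S : Set G) (h : G) : ℝ) + 1)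

/-- A group `Z` has sub-exponential growth if `|B_k(Z,T)|^{1/k} → 1` for some finite
generating set `T` of `Z`. -/
def SubExpGrowth (Z : Type*) [Group Z] : Prop :=
  ∃ T : Finset Z, Subgroup.closure (T : Set Z) = ⊤ ∧
    Filter.Tendsto (fun k : ℕ => ((ball (T : Set Z) k).ncard : ℝ) ^ (1 / (k : ℝ)))
      Filter.atTop (nhds 1)

open Pointwise

section Aux
variable {G : Type*} [Group G] {S : Set G}

lemma one_mem_ball (S : Set G) (k : ℕ) : (1 : G) ∈ ball S k :=
  ⟨[], by simp, by simp, by simp⟩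

lemma ball_mono {k m : ℕ} (h : k ≤ m) : ball S k ⊆ ball S m :=
  fun _ ⟨l, hl, hm, hp⟩ => ⟨l, hl.trans h, hm, hp⟩

lemma mul_mem_ball {g g' : G} {k m : ℕ} (hg : g ∈ ball S k) (hg' : g' ∈ ball S m) :
    g * g' ∈ ball S (k + m) := by
  obtain ⟨l, hl, hmem, hp⟩ := hg
  obtain ⟨l', hl', hmem', hp'⟩ := hg'
  exact ⟨l ++ l', by simpa using Nat.add_le_add hl hl',
    fun x hx => (List.mem_append.1 hx).elim (hmem x) (hmem' x), by simp [hp, hp']⟩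

lemma inv_mem_ball {g : G} {k : ℕ} (hg : g ∈ ball S k) : g⁻¹ ∈ ball S k := by
  obtain ⟨l, hl, hmem, hp⟩ := hg
  refine ⟨(l.map Inv.inv).reverse, by simpa using hl, ?_, ?_⟩
  · intro x hx
    simp only [List.mem_reverse, List.mem_map] at hx
    obtain ⟨y, hy, rfl⟩ := hx
    rcases hmem y hy with h | h
    · exact Or.inr (by simpa using h)
    · exact Or.inl h
  · rw [← hp, List.prod_inv_reverse]

lemma ball_finite (S : Finset G) (k : ℕ) : (ball (S : Set G) k).Finite := by
  induction k with
  | zero =>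
    refine Set.Finite.subset (Set.finite_singleton (1 : G)) ?_
    rintro g ⟨l, hl, -, hp⟩
    simp only [Nat.le_zero, List.length_eq_zero_iff] at hl
    simp [hl] at hp
    simp [← hp]
  | succ k ih =>
    have : ball (S : Set G) (k + 1) ⊆
        {(1 : G)} ∪ (((S : Set G) ∪ (S : Set G)⁻¹) * ball (S : Set G) k) := by
      rintro g ⟨l, hl, hmem, hp⟩
      match l with
      | [] => left; simp at hp; simp [← hp]
      | x :: t =>
        right
        have ht : t.prod ∈ ball (S : Set G) k :=
          ⟨t, by simpa using hl, fun y hy => hmem y (by simp [hy]), rfl⟩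
        have hx : x ∈ (S : Set G) ∪ (S : Set G)⁻¹ := by
          rcases hmem x (by simp) with h | h
          · exact Or.inl h
          · exact Or.inr (Set.mem_inv.2 (by simpa using h))
        have h2 := Set.mul_mem_mul hx ht
        simpa [← hp] using h2
    refine Set.Finite.subset ?_ this
    exact (Set.finite_singleton 1).union ((S.finite_toSet.union S.finite_toSet.inv).mul ih)

lemma exists_mem_ball (hS : Subgroup.closure S = ⊤) (g : G) : ∃ k, g ∈ ball S k := by
  have hg : g ∈ Subgroup.closure S := hS ▸ Subgroup.mem_top g
  induction hg using Subgroup.closure_induction with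
  | mem x hx => exact ⟨1, [x], by simp, by simp [hx], by simp⟩
  | one => exact ⟨0, one_mem_ball S 0⟩
  | mul x y hx hy ihx ihy =>
    obtain ⟨k, hk⟩ := ihx; obtain ⟨m, hm⟩ := ihy
    exact ⟨k + m, mul_mem_ball hk hm⟩
  | inv x hx ih =>
    obtain ⟨k, hk⟩ := ih
    exact ⟨k, inv_mem_ball hk⟩

lemma mem_ball_wordLength (hS : Subgroup.closure S = ⊤) (g : G) :
    g ∈ ball S (wordLength S g) :=
  Nat.sInf_mem (exists_mem_ball hS g)

lemma wordLength_le {g : G} {k : ℕ} (h : g ∈ ball S k) : wordLength S g ≤ k :=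
  Nat.sInf_le h

lemma list_prod_mem_ball {M : ℕ} {l : List G} (h : ∀ x ∈ l, x ∈ ball S M) :
    l.prod ∈ ball S (M * l.length) := by
  induction l with
  | nil => simpa using one_mem_ball S 0
  | cons x t ih =>
    have hx := h x (by simp)
    have ht := ih (fun y hy => h y (by simp [hy]))
    have := mul_mem_ball hx ht
    simpa [List.length_cons, Nat.mul_succ, Nat.mul_add, Nat.add_comm] using this

lemma ball_subset_ball_of_forall {S₁ : Set G} {M k : ℕ}
    (h : ∀ x : G, (x ∈ S ∨ x⁻¹ ∈ S) → x ∈ ball S₁ M) :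
    ball S k ⊆ ball S₁ (M * k) := by
  rintro g ⟨l, hl, hmem, hp⟩
  have := list_prod_mem_ball (S := S₁) (fun x hx => h x (hmem x hx))
  rw [hp] at this
  exact ball_mono (Nat.mul_le_mul_left M hl) this

lemma exists_ball_subset {S₁ : Set G} (hS₁ : Subgroup.closure S₁ = ⊤) (S₂ : Finset G) :
    ∃ M : ℕ, 1 ≤ M ∧ ∀ k, ball (S₂ : Set G) k ⊆ ball S₁ (M * k) := by
  refine ⟨1 ⊔ S₂.sup (wordLength S₁), le_max_left _ _, fun k => ?_⟩
  refine ball_subset_ball_of_forall (fun x hx => ?_)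
  rcases hx with h | h
  · refine ball_mono (le_trans (Finset.le_sup h) (le_max_right _ _))
      (mem_ball_wordLength hS₁ x)
  · have : x⁻¹ ∈ ball S₁ (wordLength S₁ x⁻¹) := mem_ball_wordLength hS₁ x⁻¹
    have h2 : x⁻¹ ∈ ball S₁ (1 ⊔ S₂.sup (wordLength S₁)) :=
      ball_mono (le_trans (Finset.le_sup h) (le_max_right _ _)) this
    simpa using inv_mem_ball h2

lemma lift_list {H : Type*} [Group H] (f : G →* H) (S : Set G) :
    ∀ l : List H, (∀ x ∈ l, x ∈ f '' S ∨ x⁻¹ ∈ f '' S) →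
      ∃ g ∈ ball S l.length, f g = l.prod := by
  intro l
  induction l with
  | nil => intro _; exact ⟨1, one_mem_ball S 0, by simp⟩
  | cons x t ih =>
    intro hmem
    obtain ⟨gt, hgt, hfgt⟩ := ih (fun y hy => hmem y (by simp [hy]))
    have hx : ∃ s : G, (s ∈ S ∨ s⁻¹ ∈ S) ∧ f s = x := by
      rcases hmem x (by simp) with ⟨s, hs, hfs⟩ | ⟨s, hs, hfs⟩
      · exact ⟨s, Or.inl hs, hfs⟩
      · exact ⟨s⁻¹, Or.inr (by simpa using hs), by rw [map_inv, hfs, inv_inv]⟩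
    obtain ⟨s, hs, rfl⟩ := hx
    refine ⟨s * gt, ?_, by rw [map_mul, hfgt]; simp⟩
    obtain ⟨lt, hlt, hltm, hltp⟩ := hgt
    refine ⟨s :: lt, by simpa using hlt, ?_, by simp [hltp]⟩
    intro y hy
    rcases List.mem_cons.1 hy with rfl | hy
    · exact hs
    · exact hltm y hy

lemma image_ball {H : Type*} [Group H] (f : G →* H) (S : Set G) (k : ℕ) :
    ball (f '' S) k = f '' ball S k := by
  ext h
  constructor
  · rintro ⟨l, hl, hmem, hp⟩
    obtain ⟨g, hg, hfg⟩ := lift_list f S l hmem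
    exact ⟨g, ball_mono hl hg, by rw [hfg, hp]⟩
  · rintro ⟨g, ⟨l, hl, hmem, hp⟩, rfl⟩
    refine ⟨l.map f, by simpa using hl, ?_, by rw [← hp]; exact (map_list_prod f l).symm⟩
    intro x hx
    simp only [List.mem_map] at hx
    obtain ⟨y, hy, rfl⟩ := hx
    rcases hmem y hy with h | h
    · exact Or.inl ⟨y, h, rfl⟩
    · exact Or.inr ⟨y⁻¹, h, by simp⟩

lemma ncard_prod' {α β : Type*} (A : Set α) (B : Set β) :
    (A ×ˢ B).ncard = A.ncard * B.ncard := by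
  rw [← Nat.card_coe_set_eq, ← Nat.card_coe_set_eq, ← Nat.card_coe_set_eq,
    Nat.card_congr (Equiv.Set.prod A B), Nat.card_prod]

open Classical in
lemma ncard_ball_le_mul {H : Type*} [Group H] (f : G →* H) (S : Finset G) (k : ℕ) :
    (ball (S : Set G) k).ncard ≤
      (ball (f '' (S : Set G)) k).ncard *
        ((f ⁻¹' {1} ∩ ball (S : Set G) (2 * k)).ncard) := by
  set Bk := ball (S : Set G) k with hBk
  have himg : ball (f '' (S : Set G)) k = f '' Bk := image_ball f _ k
  -- section
  have hσ : ∀ h ∈ f '' Bk, ∃ g ∈ Bk, f g = h := by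
    rintro h ⟨g, hg, rfl⟩; exact ⟨g, hg, rfl⟩
  set σ : H → G := fun h => if hh : h ∈ f '' Bk then (hσ h hh).choose else 1 with hσdef
  have hσ1 : ∀ h ∈ f '' Bk, σ h ∈ Bk := by
    intro h hh; rw [hσdef]; simp only [dif_pos hh]; exact (hσ h hh).choose_spec.1
  have hσ2 : ∀ h ∈ f '' Bk, f (σ h) = h := by
    intro h hh; rw [hσdef]; simp only [dif_pos hh]; exact (hσ h hh).choose_spec.2
  set Φ : G → H × G := fun g => (f g, (σ (f g))⁻¹ * g) with hΦ
  have hmaps : ∀ g ∈ Bk, Φ g ∈ (f '' Bk) ×ˢ (f ⁻¹' {1} ∩ ball (S : Set G) (2 * k)) := by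
    intro g hg
    have hfg : f g ∈ f '' Bk := ⟨g, hg, rfl⟩
    refine ⟨hfg, ?_, ?_⟩
    · simp only [Set.mem_preimage, Set.mem_singleton_iff, map_mul, map_inv, hσ2 _ hfg]
      simp [hΦ, hσ2 _ hfg]
    · have := mul_mem_ball (inv_mem_ball (hσ1 _ hfg)) hg
      simpa [two_mul] using this
  have hinj : Set.InjOn Φ Bk := by
    intro g hg g' hg' he
    have h1 : f g = f g' := congrArg Prod.fst he
    have h2 : (σ (f g))⁻¹ * g = (σ (f g'))⁻¹ * g' := congrArg Prod.snd he
    rw [h1] at h2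
    exact mul_left_cancel h2
  have hfin : ((f '' Bk) ×ˢ (f ⁻¹' {1} ∩ ball (S : Set G) (2 * k))).Finite :=
    ((ball_finite S k).image f).prod ((ball_finite S (2 * k)).inter_of_right _)
  calc Bk.ncard ≤ ((f '' Bk) ×ˢ (f ⁻¹' {1} ∩ ball (S : Set G) (2 * k))).ncard :=
        Set.ncard_le_ncard_of_injOn Φ hmaps hinj hfin
    _ = (f '' Bk).ncard * (f ⁻¹' {1} ∩ ball (S : Set G) (2 * k)).ncard := ncard_prod' _ _
    _ = _ := by rw [himg]

open Filter in
lemma tendsto_one_comp_mul {c : ℕ → ℕ} {E : ℕ} (hE : 1 ≤ E)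
    (h : Tendsto (fun m : ℕ => ((c m : ℝ)) ^ (1/(m:ℝ))) atTop (nhds 1)) :
    Tendsto (fun k : ℕ => ((c (E*k) : ℝ)) ^ (1/(k:ℝ))) atTop (nhds 1) := by
  have hcomp : Tendsto (fun k : ℕ => E * k) atTop atTop :=
    Filter.tendsto_atTop_mono (fun k => Nat.le_mul_of_pos_left k (by omega)) Filter.tendsto_id
  have h1 := (h.comp hcomp).pow E
  rw [one_pow] at h1
  refine h1.congr' ?_
  filter_upwards [Filter.eventually_ge_atTop 1] with k hk
  have hk0 : (k:ℝ) ≠ 0 := Nat.cast_ne_zero.2 (by omega)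
  have hE0 : (E:ℝ) ≠ 0 := Nat.cast_ne_zero.2 (by omega)
  show ((c (E*k) : ℝ) ^ (1/((E*k : ℕ):ℝ)))^E = (c (E*k):ℝ)^(1/(k:ℝ))
  rw [← Real.rpow_natCast ((c (E*k):ℝ) ^ (1/((E*k : ℕ):ℝ))) E,
    ← Real.rpow_mul (by positivity)]
  congr 1
  push_cast
  field_simp

end Aux

open Filter

/-- For any finite generating set `S` of `G`, the growth rate of `G` w.r.t. `S` equals
the growth rate of `H = G/Z` w.r.t. the image generating set, when `Z ⊴ G` is finitely
generated, undistorted and of sub-exponential growth. -/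
theorem growth_limit_eq_quotient (G : Type*) [Group G] (Z : Subgroup G) [Z.Normal]
    (hZfg : ∃ T : Finset Z, Subgroup.closure (T : Set Z) = ⊤)
    (hund : Undistorted Z) (hsub : SubExpGrowth Z)
    (S : Finset G) (hS : Subgroup.closure (S : Set G) = ⊤) (L : ℝ) :
    Filter.Tendsto (fun k : ℕ => ((ball (S : Set G) k).ncard : ℝ) ^ (1 / (k : ℝ)))
        Filter.atTop (nhds L) ↔
      Filter.Tendsto
        (fun k : ℕ =>
          ((ball ((QuotientGroup.mk' Z) '' (S : Set G)) k).ncard : ℝ) ^ (1 / (k : ℝ)))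
        Filter.atTop (nhds L) := by
  obtain ⟨T, hT, S₀, hS₀, C, hC, hdist⟩ := hund
  obtain ⟨T', hT', htend⟩ := hsub
  obtain ⟨M, hM1, hMball⟩ := exists_ball_subset hS₀ S
  obtain ⟨M', hM'1, hM'ball⟩ := exists_ball_subset hT' T
  set f : G →* G ⧸ Z := QuotientGroup.mk' Z with hf
  set D : ℕ := (⌈C⌉₊) * (2*M+1) with hD
  set E : ℕ := M' * D with hE
  have hCeil : 1 ≤ ⌈C⌉₊ := Nat.one_le_ceil_iff.2 hC
  have hE1 : 1 ≤ E := by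
    have : 1 ≤ D := Nat.one_le_iff_ne_zero.2 (by positivity)
    calc 1 ≤ M' := hM'1
      _ = M' * 1 := (mul_one M').symm
      _ ≤ M' * D := Nat.mul_le_mul_left M' this
  -- the key fiber inclusion
  have hkey : ∀ k : ℕ, 1 ≤ k →
      (⇑f ⁻¹' {1} ∩ ball (S : Set G) (2 * k)) ⊆
        (fun z : Z => (z : G)) '' ball (T' : Set Z) (E * k) := by
    intro k hk g ⟨hg1, hgb⟩
    have hgZ : g ∈ Z := by
      have : f g = 1 := hg1
      exact (QuotientGroup.eq_one_iff g).1 this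
    set z : Z := ⟨g, hgZ⟩ with hz
    have hgS₀ : g ∈ ball (S₀ : Set G) (M * (2 * k)) := hMball _ hgb
    have hwS₀ : wordLength (S₀ : Set G) g ≤ M * (2 * k) := wordLength_le hgS₀
    have hreal : (wordLength (T : Set Z) z : ℝ) ≤ (D * k : ℕ) := by
      have h1 := hdist z
      have h2 : (wordLength (S₀ : Set G) g : ℝ) ≤ (M : ℝ) * (2 * k) := by
        calc (wordLength (S₀ : Set G) g : ℝ) ≤ ((M * (2 * k) : ℕ) : ℝ) :=
              Nat.cast_le.2 hwS₀
          _ = (M : ℝ) * (2 * k) := by push_cast; ring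
      have hk1 : (1:ℝ) ≤ (k:ℝ) := by exact_mod_cast hk
      have hCle : C ≤ (⌈C⌉₊ : ℝ) := Nat.le_ceil C
      have hM0 : (0:ℝ) ≤ (M:ℝ) := Nat.cast_nonneg M
      calc (wordLength (T : Set Z) z : ℝ)
          ≤ C * ((wordLength (S₀ : Set G) (z : G)) + 1) := h1
        _ ≤ (⌈C⌉₊ : ℝ) * ((M : ℝ) * (2 * k) + (k:ℝ)) := by
            refine mul_le_mul hCle ?_ (by positivity) (by positivity)
            have : ((wordLength (S₀ : Set G) (z : G)) : ℝ) ≤ (M : ℝ) * (2 * k) := h2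
            linarith
        _ = ((D * k : ℕ) : ℝ) := by rw [hD]; push_cast; ring
    have hwT : wordLength (T : Set Z) z ≤ D * k := by exact_mod_cast hreal
    have hzT : z ∈ ball (T : Set Z) (D * k) :=
      ball_mono hwT (mem_ball_wordLength hT z)
    have hzT' : z ∈ ball (T' : Set Z) (E * k) := by
      have := hM'ball (D * k) hzT
      rwa [hE, mul_assoc]
    exact ⟨z, hzT', rfl⟩
  -- counting inequality
  set a : ℕ → ℕ := fun k => (ball (S : Set G) k).ncard with ha
  set b : ℕ → ℕ := fun k => (ball (⇑f '' (S : Set G)) k).ncard with hb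
  set c : ℕ → ℕ := fun m => (ball (T' : Set Z) m).ncard with hc'
  have hba : ∀ k, b k ≤ a k := by
    intro k
    rw [hb, ha]
    simp only [image_ball]
    exact Set.ncard_image_le (ball_finite S k)
  have habc : ∀ k, 1 ≤ k → a k ≤ b k * c (E * k) := by
    intro k hk
    refine le_trans (ncard_ball_le_mul f S k) ?_
    refine Nat.mul_le_mul_left _ ?_
    calc (⇑f ⁻¹' {1} ∩ ball (S : Set G) (2 * k)).ncard
        ≤ ((fun z : Z => (z : G)) '' ball (T' : Set Z) (E * k)).ncard :=
          Set.ncard_le_ncard (hkey k hk) ((ball_finite T' (E * k)).image _)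
      _ ≤ c (E * k) := Set.ncard_image_le (ball_finite T' (E * k))
  have hc1 : ∀ m, 1 ≤ c m := fun m =>
    (Set.ncard_pos (ball_finite T' m)).2 ⟨1, one_mem_ball _ m⟩
  -- real sequences
  set A : ℕ → ℝ := fun k => ((a k : ℝ)) ^ (1/(k:ℝ)) with hA
  set B : ℕ → ℝ := fun k => ((b k : ℝ)) ^ (1/(k:ℝ)) with hB
  set Cc : ℕ → ℝ := fun k => ((c (E*k) : ℝ)) ^ (1/(k:ℝ)) with hCc
  have hCtend : Tendsto Cc atTop (nhds 1) := tendsto_one_comp_mul hE1 htend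
  have hCpos : ∀ k, (0:ℝ) < Cc k := by
    intro k
    have : (0:ℝ) < (c (E*k) : ℝ) := by exact_mod_cast hc1 (E*k)
    positivity
  have hBA : ∀ k, B k ≤ A k := fun k =>
    Real.rpow_le_rpow (Nat.cast_nonneg _) (Nat.cast_le.2 (hba k)) (by positivity)
  have hABC : ∀ k, 1 ≤ k → A k ≤ B k * Cc k := by
    intro k hk
    calc A k ≤ ((b k * c (E*k) : ℕ) : ℝ) ^ (1/(k:ℝ)) :=
          Real.rpow_le_rpow (Nat.cast_nonneg _) (Nat.cast_le.2 (habc k hk)) (by positivity)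
      _ = B k * Cc k := by
          rw [Nat.cast_mul, Real.mul_rpow (Nat.cast_nonneg _) (Nat.cast_nonneg _)]
  constructor
  · intro hAt
    have hlow : Tendsto (fun k => A k / Cc k) atTop (nhds L) := by
      have := hAt.div hCtend one_ne_zero
      rw [div_one] at this; exact this
    refine tendsto_of_tendsto_of_tendsto_of_le_of_le' hlow hAt ?_ ?_
    · filter_upwards [Filter.eventually_ge_atTop 1] with k hk
      exact (div_le_iff₀ (hCpos k)).2 (hABC k hk)
    · filter_upwards with k
      exact hBA k
  · intro hBt
    have hup : Tendsto (fun k => B k * Cc k) atTop (nhds L) := by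
      have := hBt.mul hCtend
      simpa using this
    refine tendsto_of_tendsto_of_tendsto_of_le_of_le' hBt hup ?_ ?_
    · filter_upwards with k
      exact hBA k
    · filter_upwards [Filter.eventually_ge_atTop 1] with k hk
      exact hABC k hk
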